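/- arXiv:1909.11860 — 3 statements merged into one kernel-verified Lean document; each statement's English description precedes it below -/
import Mathlib

section
/- Let G be a simple graph on n vertices with m edges, and let λ_n(G) be the smallest eigenvalue of the adjacency matrix A(G). Then mcut(G) ≤ m/2 - n·λ_n(G)/4. -/
open Finset Matrix BigOperators

set_option linter.unusedSectionVars false

variable {V : Type*} [Fintype V] [DecidableEq V]

/-- Number of edges of `G` with exactly one endpoint in `S` (each unordered edge counted once,
as the ordered pair going out of `S`). -/
def cutNum (G : SimpleGraph V) [DecidableRel G.Adj] (S : Finset V) : ℕ :=
  (Finset.univ.filter (fun p : V × V => G.Adj p.1 p.2 ∧ p.1 ∈ S ∧ p.2 ∉ S)).card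

/-- Number of edges of `G` with both endpoints in `S` or both outside `S`. -/
def cohNum (G : SimpleGraph V) [DecidableRel G.Adj] (S : Finset V) : ℕ :=
  G.edgeFinset.card - cutNum G S

/-- The maximum cut of `G`. -/
def mcut (G : SimpleGraph V) [DecidableRel G.Adj] : ℕ :=
  Finset.univ.sup (fun S : Finset V => cutNum G S)

/-- The ±1 partition vector of a vertex subset `S`. -/
def pvec (S : Finset V) : V → ℝ := fun v => if v ∈ S then 1 else -1

/-- The signless Laplacian matrix `Q = D + A` of a graph. -/
def signlessLap (G : SimpleGraph V) [DecidableRel G.Adj] : Matrix V V ℝ :=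
  G.degMatrix ℝ + G.adjMatrix ℝ

lemma isHermitian_adj (G : SimpleGraph V) [DecidableRel G.Adj] :
    (G.adjMatrix ℝ).IsHermitian := by
  rw [IsHermitian, conjTranspose_eq_transpose_of_trivial]
  exact SimpleGraph.isSymm_adjMatrix G

lemma isHermitian_lap (G : SimpleGraph V) [DecidableRel G.Adj] :
    (G.lapMatrix ℝ).IsHermitian := by
  rw [IsHermitian, conjTranspose_eq_transpose_of_trivial]
  exact G.isSymm_lapMatrix ℝ

lemma isHermitian_signlessLap (G : SimpleGraph V) [DecidableRel G.Adj] :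
    (signlessLap G).IsHermitian := by
  rw [IsHermitian, conjTranspose_eq_transpose_of_trivial]
  exact (G.isSymm_degMatrix ℝ).add (SimpleGraph.isSymm_adjMatrix G)

/-- The spanning subgraph of `G` consisting of the edges between `S` and its complement. -/
def crossGraph (G : SimpleGraph V) (S : Finset V) : SimpleGraph V where
  Adj u v := G.Adj u v ∧ ((u ∈ S) ↔ (v ∉ S))
  symm := ⟨fun u v h => ⟨h.1.symm, by tauto⟩⟩
  loopless := ⟨fun v h => G.loopless.irrefl v h.1⟩

/-- The spanning subgraph of `G` consisting of the edges inside `S` or inside its complement. -/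
def insideGraph (G : SimpleGraph V) (S : Finset V) : SimpleGraph V where
  Adj u v := G.Adj u v ∧ ((u ∈ S) ↔ (v ∈ S))
  symm := ⟨fun u v h => ⟨h.1.symm, h.2.symm⟩⟩
  loopless := ⟨fun v h => G.loopless.irrefl v h.1⟩

instance (G : SimpleGraph V) [DecidableRel G.Adj] (S : Finset V) :
    DecidableRel (crossGraph G S).Adj := fun _ _ => inferInstanceAs (Decidable (_ ∧ _))

instance (G : SimpleGraph V) [DecidableRel G.Adj] (S : Finset V) :
    DecidableRel (insideGraph G S).Adj := fun _ _ => inferInstanceAs (Decidable (_ ∧ _))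

/-- The second largest value (with multiplicity) of a finitely indexed family of reals. -/
noncomputable def secondLargest (f : V → ℝ) : ℝ :=
  (Multiset.sort (Finset.univ.val.map f) (· ≤ ·)).getD (Fintype.card V - 2) 0

/-- The join of two graphs: disjoint union plus all edges in between. -/
def joinGraph {α β : Type*} (H₁ : SimpleGraph α) (H₂ : SimpleGraph β) :
    SimpleGraph (α ⊕ β) where
  Adj x y :=
    match x, y with
    | Sum.inl u, Sum.inl v => H₁.Adj u v
    | Sum.inr u, Sum.inr v => H₂.Adj u v
    | Sum.inl _, Sum.inr _ => True
    | Sum.inr _, Sum.inl _ => True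
  symm := ⟨by rintro (u | u) (v | v) h <;> first | exact h.symm | trivial⟩
  loopless := ⟨by
    rintro (u | u) h
    · exact H₁.loopless.irrefl u h
    · exact H₂.loopless.irrefl u h⟩

instance {α β : Type*} (H₁ : SimpleGraph α) (H₂ : SimpleGraph β)
    [DecidableRel H₁.Adj] [DecidableRel H₂.Adj] :
    DecidableRel (joinGraph H₁ H₂).Adj := fun x y =>
  match x, y with
  | Sum.inl u, Sum.inl v => inferInstanceAs (Decidable (H₁.Adj u v))
  | Sum.inr u, Sum.inr v => inferInstanceAs (Decidable (H₂.Adj u v))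
  | Sum.inl _, Sum.inr _ => inferInstanceAs (Decidable True)
  | Sum.inr _, Sum.inl _ => inferInstanceAs (Decidable True)

lemma rayleigh_min {A : Matrix V V ℝ} (hA : A.IsHermitian) (x : V → ℝ) :
    (⨅ i, hA.eigenvalues i) * (x ⬝ᵥ x) ≤ x ⬝ᵥ A *ᵥ x := by
  cases isEmpty_or_nonempty V with
  | inl h => simp [dotProduct, Real.iInf_of_isEmpty]
  | inr h =>
  set μ := ⨅ i, hA.eigenvalues i with hμ
  have hmu : ∀ i, μ ≤ hA.eigenvalues i := fun i =>
    ciInf_le (Set.Finite.bddBelow (Set.finite_range _)) i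
  have hU := (Matrix.mem_unitaryGroup_iff).mp (hA.eigenvectorUnitary).2
  have h1 : A - μ • 1 = (hA.eigenvectorUnitary : Matrix V V ℝ) *
      diagonal (fun i => hA.eigenvalues i - μ) *
      (hA.eigenvectorUnitary : Matrix V V ℝ)ᴴ := by
    have h2 : (μ • 1 : Matrix V V ℝ) = (hA.eigenvectorUnitary : Matrix V V ℝ) *
        (μ • 1) * (hA.eigenvectorUnitary : Matrix V V ℝ)ᴴ := by
      rw [Matrix.mul_smul, mul_one, Matrix.smul_mul]
      rw [show (hA.eigenvectorUnitary : Matrix V V ℝ)ᴴ = star (hA.eigenvectorUnitary : Matrix V V ℝ) from rfl, hU]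
    conv_lhs => rw [hA.spectral_theorem, Unitary.conjStarAlgAut_apply, h2]
    rw [show star (hA.eigenvectorUnitary : Matrix V V ℝ) = (hA.eigenvectorUnitary : Matrix V V ℝ)ᴴ from rfl]
    rw [← Matrix.sub_mul, ← Matrix.mul_sub]
    congr 2
    ext i j
    by_cases hij : i = j <;> simp [diagonal, hij, Matrix.one_apply]
  have hB : (A - μ • 1).PosSemidef := by
    rw [h1]
    exact (Matrix.PosSemidef.diagonal (fun i => by simpa using hmu i)).mul_mul_conjTranspose_same _
  have := hB.dotProduct_mulVec_nonneg x
  simp only [sub_mulVec, dotProduct_sub, smul_mulVec, one_mulVec, dotProduct_smul,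
    star_trivial, smul_eq_mul] at this
  linarith

lemma pvec_dot (S : Finset V) : pvec S ⬝ᵥ pvec S = (Fintype.card V : ℝ) := by
  unfold dotProduct pvec
  have : ∀ v : V, (if v ∈ S then (1:ℝ) else -1) * (if v ∈ S then 1 else -1) = 1 := by
    intro v; split <;> ring
  simp_rw [this, Finset.sum_const, Fintype.card]
  simp

lemma quad_eq (G : SimpleGraph V) [DecidableRel G.Adj] (S : Finset V) :
    pvec S ⬝ᵥ (G.adjMatrix ℝ *ᵥ pvec S)
      = 2 * (G.edgeFinset.card : ℝ) - 4 * (cutNum G S : ℝ) := by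
  have hL : pvec S ⬝ᵥ (G.adjMatrix ℝ *ᵥ pvec S)
      = ∑ p : V × V, (if G.Adj p.1 p.2 then pvec S p.1 * pvec S p.2 else 0) := by
    rw [Fintype.sum_prod_type]
    unfold dotProduct mulVec dotProduct
    apply Finset.sum_congr rfl; intro u _
    rw [Finset.mul_sum]
    apply Finset.sum_congr rfl; intro v _
    by_cases h : G.Adj u v <;> simp [SimpleGraph.adjMatrix, h] <;> ring
  have hpt : ∀ p : V × V, (if G.Adj p.1 p.2 then pvec S p.1 * pvec S p.2 else 0)
      = (if G.Adj p.1 p.2 then (1:ℝ) else 0)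
        - 2 * (if G.Adj p.1 p.2 ∧ p.1 ∈ S ∧ p.2 ∉ S then (1:ℝ) else 0)
        - 2 * (if G.Adj p.1 p.2 ∧ p.1 ∉ S ∧ p.2 ∈ S then (1:ℝ) else 0) := by
    intro p
    unfold pvec
    by_cases h : G.Adj p.1 p.2 <;> by_cases h1 : p.1 ∈ S <;> by_cases h2 : p.2 ∈ S <;>
      simp [h, h1, h2] <;> ring
  rw [hL]
  simp_rw [hpt]
  rw [Finset.sum_sub_distrib, Finset.sum_sub_distrib, ← Finset.mul_sum, ← Finset.mul_sum]
  have h1 : ∑ p : V × V, (if G.Adj p.1 p.2 then (1:ℝ) else 0) = 2 * (G.edgeFinset.card : ℝ) := by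
    rw [Fintype.sum_prod_type]
    have : ∀ u : V, ∑ v : V, (if G.Adj u v then (1:ℝ) else 0) = (G.degree u : ℝ) := by
      intro u
      rw [Finset.sum_boole, SimpleGraph.degree]
      congr 1
      norm_cast
      congr 1
      ext v; simp
    simp_rw [this]
    rw [← Nat.cast_sum]
    rw [SimpleGraph.sum_degrees_eq_twice_card_edges]
    push_cast; ring
  have h2 : ∑ p : V × V, (if G.Adj p.1 p.2 ∧ p.1 ∈ S ∧ p.2 ∉ S then (1:ℝ) else 0)
      = (cutNum G S : ℝ) := by
    rw [Finset.sum_boole, cutNum]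
  have h3 : ∑ p : V × V, (if G.Adj p.1 p.2 ∧ p.1 ∉ S ∧ p.2 ∈ S then (1:ℝ) else 0)
      = (cutNum G S : ℝ) := by
    rw [← h2]
    apply Fintype.sum_equiv (Equiv.prodComm V V)
    intro p
    simp only [Equiv.prodComm_apply, Prod.fst_swap, Prod.snd_swap]
    congr 1
    apply propext
    constructor
    · rintro ⟨h, h1, h2⟩; exact ⟨h.symm, h2, h1⟩
    · rintro ⟨h, h1, h2⟩; exact ⟨h.symm, h2, h1⟩
  rw [h1, h2, h3]; ring

/-- `mcut(G) ≤ m/2 - n·λₙ(G)/4`. -/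
theorem stmt4 (G : SimpleGraph V) [DecidableRel G.Adj] :
    (mcut G : ℝ) ≤ (G.edgeFinset.card : ℝ) / 2 - (Fintype.card V : ℝ) * (⨅ i, (isHermitian_adj G).eigenvalues i) / 4 := by
  obtain ⟨S, -, hS⟩ := Finset.exists_mem_eq_sup (univ : Finset (Finset V)) ⟨∅, mem_univ _⟩ (cutNum G)
  rw [mcut, hS]
  have hr := rayleigh_min (isHermitian_adj G) (pvec S)
  rw [pvec_dot, quad_eq] at hr
  linarith
end

section
/- Let G be a simple graph on n vertices and S ⊆ V. The partition vector p_S (entries +1 on S, -1 off S) is an eigenvector of the signless Laplacian Q(G) with eigenvalue q if and only if both induced subgraphs G[S] and G[V\S] are (q/2)-regular. -/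
open Finset Matrix BigOperators

set_option linter.unusedSectionVars false

variable {V : Type*} [Fintype V] [DecidableEq V]

lemma pvec_entry (G : SimpleGraph V) [DecidableRel G.Adj] (S : Finset V) (v : V) :
    (signlessLap G *ᵥ pvec S) v =
      if v ∈ S then 2 * ((S.filter (fun u => G.Adj v u)).card : ℝ)
      else -(2 * ((Sᶜ.filter (fun u => G.Adj v u)).card : ℝ)) := by
  set a : ℝ := ((S.filter (fun u => G.Adj v u)).card : ℝ) with ha
  set b : ℝ := ((Sᶜ.filter (fun u => G.Adj v u)).card : ℝ) with hb
  have hdeg : (G.degree v : ℝ) = a + b := by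
    have hu : S.filter (fun u => G.Adj v u) ∪ Sᶜ.filter (fun u => G.Adj v u)
        = univ.filter (fun u => G.Adj v u) := by
      rw [← Finset.filter_union, Finset.union_compl]
    have hd : Disjoint (S.filter (fun u => G.Adj v u)) (Sᶜ.filter (fun u => G.Adj v u)) :=
      Finset.disjoint_filter_filter disjoint_compl_right
    have hc := Finset.card_union_of_disjoint hd
    rw [hu] at hc
    rw [SimpleGraph.degree, SimpleGraph.neighborFinset_eq_filter, hc, ha, hb]
    push_cast; ring
  have hA : ((G.adjMatrix ℝ) *ᵥ pvec S) v = a - b := by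
    rw [SimpleGraph.adjMatrix_mulVec_apply, SimpleGraph.neighborFinset_eq_filter,
      ← Finset.sum_filter_add_sum_filter_not (univ.filter (fun u => G.Adj v u)) (· ∈ S)]
    have h1 : (univ.filter (fun u => G.Adj v u)).filter (· ∈ S)
        = S.filter (fun u => G.Adj v u) := by
      ext u; simp [and_comm]
    have h2 : (univ.filter (fun u => G.Adj v u)).filter (fun u => ¬ (u ∈ S))
        = Sᶜ.filter (fun u => G.Adj v u) := by
      ext u; simp [and_comm]
    rw [h1, h2]
    have e1 : ∑ u ∈ S.filter (fun u => G.Adj v u), pvec S u = a := by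
      have hc : ∀ u ∈ S.filter (fun u => G.Adj v u), pvec S u = (1 : ℝ) := fun u hu => by
        simp only [pvec, if_pos (Finset.mem_filter.mp hu).1]
      rw [Finset.sum_congr rfl hc, Finset.sum_const, nsmul_eq_mul, mul_one, ha]
    have e2 : ∑ u ∈ Sᶜ.filter (fun u => G.Adj v u), pvec S u = -b := by
      have hc : ∀ u ∈ Sᶜ.filter (fun u => G.Adj v u), pvec S u = (-1 : ℝ) := fun u hu => by
        simp only [pvec, if_neg (Finset.mem_compl.mp (Finset.mem_filter.mp hu).1)]
      rw [Finset.sum_congr rfl hc, Finset.sum_const, nsmul_eq_mul, mul_neg_one, hb]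
    rw [e1, e2]; ring
  have : (signlessLap G *ᵥ pvec S) v
      = (G.degree v : ℝ) * pvec S v + ((G.adjMatrix ℝ) *ᵥ pvec S) v := by
    rw [signlessLap, add_mulVec, Pi.add_apply, SimpleGraph.degMatrix_mulVec_apply]
  rw [this, hA, hdeg]
  by_cases hv : v ∈ S <;> simp [pvec, hv] <;> ring

/-- `pₛ` is an eigenvector of `Q(G)` for the eigenvalue `q` iff both induced subgraphs
`G[S]` and `G[V \ S]` are `(q/2)`-regular. -/
theorem stmt10 (G : SimpleGraph V) [DecidableRel G.Adj] (S : Finset V) (q : ℝ) :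
    signlessLap G *ᵥ pvec S = q • pvec S ↔
      ((∀ v ∈ S, ((S.filter (fun u => G.Adj v u)).card : ℝ) = q / 2) ∧
        (∀ v ∉ S, ((Sᶜ.filter (fun u => G.Adj v u)).card : ℝ) = q / 2)) := by
  constructor
  · intro h
    constructor
    · intro v hv
      have hv' := congrFun h v
      rw [pvec_entry, if_pos hv] at hv'
      simp only [Pi.smul_apply, pvec, if_pos hv, smul_eq_mul, mul_one] at hv'
      linarith
    · intro v hv
      have hv' := congrFun h v
      rw [pvec_entry, if_neg hv] at hv'
      simp only [Pi.smul_apply, pvec, if_neg hv, smul_eq_mul, mul_neg_one] at hv'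
      linarith
  · rintro ⟨h1, h2⟩
    funext v
    rw [pvec_entry]
    by_cases hv : v ∈ S
    · rw [if_pos hv, h1 v hv]
      simp only [Pi.smul_apply, pvec, if_pos hv, smul_eq_mul, mul_one]
      ring
    · rw [if_neg hv, h2 v hv]
      simp only [Pi.smul_apply, pvec, if_neg hv, smul_eq_mul, mul_neg_one]
      ring
end

section
/- Let H_1 and H_2 be simple graphs each on n vertices and let G = H_1 ∇ H_2 be their join. Then G is L-exact: μ_1(G) = 2n = (4/(2n))·mcut(G), with mcut(G) = n², attained by the partition {V(H_1), V(H_2)}. -/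
open Finset Matrix BigOperators

set_option linter.unusedSectionVars false

variable {V : Type*} [Fintype V] [DecidableEq V]

section AuxSpectral

lemma aux_dot_self {A : Matrix V V ℝ} (hA : A.IsHermitian) (i : V) :
    ⇑(hA.eigenvectorBasis i) ⬝ᵥ ⇑(hA.eigenvectorBasis i) = 1 := by
  have h1 : ‖hA.eigenvectorBasis i‖ = 1 := hA.eigenvectorBasis.orthonormal.1 i
  have h2 : (inner (𝕜 := ℝ) (hA.eigenvectorBasis i) (hA.eigenvectorBasis i)) = (1 : ℝ) := by
    rw [real_inner_self_eq_norm_mul_norm, h1, one_mul]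
  rw [← h2, PiLp.inner_apply]
  simp [dotProduct]
  simp only [sq]

lemma aux_eig_le {A : Matrix V V ℝ} (hA : A.IsHermitian) {c : ℝ}
    (h : (c • (1 : Matrix V V ℝ) - A).PosSemidef) (i : V) : hA.eigenvalues i ≤ c := by
  have h0 := h.dotProduct_mulVec_nonneg (⇑(hA.eigenvectorBasis i))
  rw [sub_mulVec, smul_mulVec, one_mulVec, dotProduct_sub, dotProduct_smul,
    hA.mulVec_eigenvectorBasis, dotProduct_smul, star_trivial, aux_dot_self] at h0
  simp only [smul_eq_mul, mul_one] at h0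
  linarith

lemma aux_exists_eig {A : Matrix V V ℝ} (hA : A.IsHermitian) {x : V → ℝ} (hx : x ≠ 0)
    {μ : ℝ} (h : A *ᵥ x = μ • x) : ∃ i, hA.eigenvalues i = μ := by
  set B := hA.eigenvectorBasis with hB
  set y : EuclideanSpace ℝ V := WithLp.toLp 2 x with hy
  have hy0 : y ≠ 0 := by simpa [hy] using hx
  have hc : B.repr y ≠ 0 := by
    intro h0
    apply hy0
    have := congrArg B.repr.symm h0
    simpa using this
  obtain ⟨i, hi⟩ := Function.ne_iff.mp
    (show (B.repr y).ofLp ≠ 0 from fun h0 => hc (by ext j; exact congrFun h0 j))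
  have hrepr : B.repr y i = ⇑(B i) ⬝ᵥ x := by
    rw [OrthonormalBasis.repr_apply_apply, PiLp.inner_apply]
    simp [dotProduct, hy, mul_comm]
  have hAT : Aᵀ = A := by
    rw [← conjTranspose_eq_transpose_of_trivial]; exact hA
  have key : hA.eigenvalues i * (⇑(B i) ⬝ᵥ x) = μ * (⇑(B i) ⬝ᵥ x) := by
    have h1 : ⇑(B i) ⬝ᵥ (A *ᵥ x) = (A *ᵥ ⇑(B i)) ⬝ᵥ x := by
      rw [dotProduct_mulVec, ← hAT, mulVec_transpose, hAT]
    rw [h, hB, hA.mulVec_eigenvectorBasis, smul_dotProduct, dotProduct_smul] at h1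
    simpa using h1.symm
  refine ⟨i, ?_⟩
  have hne : (⇑(B i) ⬝ᵥ x) ≠ 0 := by rw [← hrepr]; simpa using hi
  exact mul_right_cancel₀ hne key

lemma aux_J_posSemidef : (Matrix.of (fun _ _ => (1 : ℝ)) : Matrix V V ℝ).PosSemidef := by
  refine PosSemidef.of_dotProduct_mulVec_nonneg ?_ ?_
  · ext i j; simp [conjTranspose]
  · intro x
    have : star x ⬝ᵥ ((Matrix.of (fun _ _ => (1 : ℝ)) : Matrix V V ℝ) *ᵥ x)
        = (∑ i, x i) * (∑ i, x i) := by
      simp [dotProduct, mulVec, Finset.sum_mul]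
    rw [this]
    exact mul_self_nonneg _

lemma aux_card_smul_sub_lap (G : SimpleGraph V) [DecidableRel G.Adj] :
    (((Fintype.card V : ℝ)) • (1 : Matrix V V ℝ) - G.lapMatrix ℝ).PosSemidef := by
  classical
  have hmat : ((Fintype.card V : ℝ)) • (1 : Matrix V V ℝ) - G.lapMatrix ℝ
      = Gᶜ.lapMatrix ℝ + Matrix.of (fun _ _ => (1 : ℝ)) := by
    ext i j
    by_cases hij : i = j
    · subst hij
      have hd : Gᶜ.degree i = Fintype.card V - 1 - G.degree i := G.degree_compl i
      have hlt : G.degree i < Fintype.card V := G.degree_lt_card_verts i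
      simp only [Matrix.sub_apply, Matrix.smul_apply, Matrix.one_apply_eq, Matrix.add_apply,
        SimpleGraph.lapMatrix, SimpleGraph.degMatrix, Matrix.diagonal_apply_eq,
        SimpleGraph.adjMatrix_apply, Matrix.of_apply, Matrix.sub_apply]
      rw [hd]
      have : ((Fintype.card V - 1 - G.degree i : ℕ) : ℝ)
          = (Fintype.card V : ℝ) - 1 - G.degree i := by
        have h1 : G.degree i ≤ Fintype.card V - 1 := by omega
        have h2 : 1 ≤ Fintype.card V := by omega
        push_cast [Nat.cast_sub h1, Nat.cast_sub h2]
        ring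
      rw [this]
      simp [G.irrefl]
      ring
    · have hc : Gᶜ.Adj i j ↔ ¬ G.Adj i j := by
        simp [SimpleGraph.compl_adj, hij]
      simp only [Matrix.sub_apply, Matrix.smul_apply, Matrix.one_apply_ne hij, Matrix.add_apply,
        SimpleGraph.lapMatrix, SimpleGraph.degMatrix, Matrix.diagonal_apply_ne _ hij,
        SimpleGraph.adjMatrix_apply, Matrix.of_apply, Matrix.sub_apply]
      by_cases h : G.Adj i j <;> simp [h, hc]
  rw [hmat]
  exact (SimpleGraph.posSemidef_lapMatrix ℝ Gᶜ).add aux_J_posSemidef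

end AuxSpectral

section AuxJoin

lemma aux_pvec_inl {k : ℕ} (a : Fin k) :
    pvec ((Finset.univ.image Sum.inl : Finset (Fin k ⊕ Fin k))) (Sum.inl a) = 1 := by
  simp [pvec]

lemma aux_pvec_inr {k : ℕ} (b : Fin k) :
    pvec ((Finset.univ.image Sum.inl : Finset (Fin k ⊕ Fin k))) (Sum.inr b) = -1 := by
  simp [pvec]

variable {k : ℕ} (H₁ H₂ : SimpleGraph (Fin k)) [DecidableRel H₁.Adj] [DecidableRel H₂.Adj]

lemma join_adj_ll (a b : Fin k) : (joinGraph H₁ H₂).Adj (Sum.inl a) (Sum.inl b) ↔ H₁.Adj a b :=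
  Iff.rfl

lemma join_adj_rr (a b : Fin k) : (joinGraph H₁ H₂).Adj (Sum.inr a) (Sum.inr b) ↔ H₂.Adj a b :=
  Iff.rfl

lemma join_adj_lr (a b : Fin k) : (joinGraph H₁ H₂).Adj (Sum.inl a) (Sum.inr b) := trivial

lemma join_adj_rl (a b : Fin k) : (joinGraph H₁ H₂).Adj (Sum.inr a) (Sum.inl b) := trivial

lemma aux_degree_cast {W : Type*} [Fintype W] [DecidableEq W] (G : SimpleGraph W)
    [DecidableRel G.Adj] (u : W) :
    (G.degree u : ℝ) = ∑ w, if G.Adj u w then (1 : ℝ) else 0 := by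
  rw [SimpleGraph.degree, SimpleGraph.neighborFinset_eq_filter, Finset.card_filter]
  push_cast
  rfl

lemma aux_neigh_sum {W : Type*} [Fintype W] [DecidableEq W] (G : SimpleGraph W)
    [DecidableRel G.Adj] (u : W) (f : W → ℝ) :
    ∑ w ∈ G.neighborFinset u, f w = ∑ w, if G.Adj u w then f w else 0 := by
  rw [SimpleGraph.neighborFinset_eq_filter, Finset.sum_filter]

lemma aux_eigvec :
    (joinGraph H₁ H₂).lapMatrix ℝ *ᵥ pvec (Finset.univ.image Sum.inl)
      = (2 * (k : ℝ)) • pvec (Finset.univ.image Sum.inl) := by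
  funext u
  rw [Pi.smul_apply, smul_eq_mul, SimpleGraph.lapMatrix_mulVec_apply, aux_neigh_sum,
    aux_degree_cast]
  obtain (a | a) := u
  · have h1 : ∑ w, (if (joinGraph H₁ H₂).Adj (Sum.inl a) w then (1:ℝ) else 0)
        = (∑ b, if H₁.Adj a b then (1:ℝ) else 0) + k := by
      rw [Fintype.sum_sum_type]
      simp only [join_adj_ll, if_pos (join_adj_lr H₁ H₂ a _)]
      simp
    have h2 : ∑ w, (if (joinGraph H₁ H₂).Adj (Sum.inl a) w then
          pvec (Finset.univ.image Sum.inl) w else 0)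
        = (∑ b, if H₁.Adj a b then (1:ℝ) else 0) - k := by
      rw [Fintype.sum_sum_type]
      simp only [join_adj_ll, if_pos (join_adj_lr H₁ H₂ a _), aux_pvec_inl, aux_pvec_inr]
      simp
      ring
    rw [h1, h2, aux_pvec_inl]
    ring
  · have h1 : ∑ w, (if (joinGraph H₁ H₂).Adj (Sum.inr a) w then (1:ℝ) else 0)
        = (k : ℝ) + (∑ b, if H₂.Adj a b then (1:ℝ) else 0) := by
      rw [Fintype.sum_sum_type]
      simp only [join_adj_rr, if_pos (join_adj_rl H₁ H₂ a _)]
      simp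
    have h2 : ∑ w, (if (joinGraph H₁ H₂).Adj (Sum.inr a) w then
          pvec (Finset.univ.image Sum.inl) w else 0)
        = (k : ℝ) - (∑ b, if H₂.Adj a b then (1:ℝ) else 0) := by
      rw [Fintype.sum_sum_type]
      simp only [join_adj_rr, if_pos (join_adj_rl H₁ H₂ a _), aux_pvec_inl, aux_pvec_inr]
      have hneg : ∀ b : Fin k, (if H₂.Adj a b then (-1:ℝ) else 0)
          = -(if H₂.Adj a b then (1:ℝ) else 0) := by
        intro b; split <;> ring
      rw [Finset.sum_congr rfl (fun b _ => hneg b)]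
      simp [sub_eq_add_neg]
    rw [h1, h2, aux_pvec_inr]
    ring

lemma aux_cutNum_le (G : SimpleGraph V) [DecidableRel G.Adj] (S : Finset V) :
    cutNum G S ≤ S.card * Sᶜ.card := by
  rw [cutNum]
  calc (Finset.univ.filter (fun p : V × V => G.Adj p.1 p.2 ∧ p.1 ∈ S ∧ p.2 ∉ S)).card
      ≤ (S ×ˢ Sᶜ).card := by
        apply Finset.card_le_card
        intro p hp
        simp only [Finset.mem_filter] at hp
        simp [Finset.mem_product, hp.2.1, hp.2.2]
    _ = S.card * Sᶜ.card := Finset.card_product S Sᶜ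

lemma aux_cut_prod_le (S : Finset (Fin k ⊕ Fin k)) : S.card * Sᶜ.card ≤ k ^ 2 := by
  have h : S.card + Sᶜ.card = 2 * k := by
    rw [Finset.card_add_card_compl]
    simp [Fintype.card_sum, two_mul]
  have hz : (S.card : ℤ) * Sᶜ.card ≤ (k : ℤ) ^ 2 := by
    have hc : (S.card : ℤ) + Sᶜ.card = 2 * k := by exact_mod_cast h
    nlinarith [sq_nonneg ((S.card : ℤ) - Sᶜ.card)]
  exact_mod_cast hz

lemma aux_cutNum_eq :
    cutNum (joinGraph H₁ H₂) (Finset.univ.image Sum.inl) = k ^ 2 := by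
  rw [cutNum]
  have hset : (Finset.univ.filter (fun p : (Fin k ⊕ Fin k) × (Fin k ⊕ Fin k) =>
        (joinGraph H₁ H₂).Adj p.1 p.2 ∧ p.1 ∈ Finset.univ.image Sum.inl ∧
        p.2 ∉ Finset.univ.image Sum.inl))
      = Finset.univ.image (fun ab : Fin k × Fin k => (Sum.inl ab.1, Sum.inr ab.2)) := by
    ext p
    obtain ⟨(a | a), (b | b)⟩ := p <;>
      simp [join_adj_ll, join_adj_rr, join_adj_lr, join_adj_rl, Prod.ext_iff]
  rw [hset, Finset.card_image_of_injective]
  · simp [sq]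
  · intro p q hpq
    simp only [Prod.ext_iff, Sum.inl.injEq, Sum.inr.injEq] at hpq
    exact Prod.ext hpq.1 hpq.2

lemma aux_mcut :
    mcut (joinGraph H₁ H₂) = k ^ 2 := by
  apply le_antisymm
  · apply Finset.sup_le
    intro S _
    exact (aux_cutNum_le _ S).trans (aux_cut_prod_le S)
  · rw [← aux_cutNum_eq H₁ H₂]
    exact Finset.le_sup (Finset.mem_univ _)

end AuxJoin

/-- The join of any two graphs on `n` vertices is `L`-exact, with `μ₁ = 2n`,
`mcut = n²` attained by the partition into the two sides. -/
theorem stmt17 {k : ℕ} (H₁ H₂ : SimpleGraph (Fin k))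
    [DecidableRel H₁.Adj] [DecidableRel H₂.Adj] :
    (⨆ i, (isHermitian_lap (joinGraph H₁ H₂)).eigenvalues i) = 2 * (k : ℝ) ∧
      mcut (joinGraph H₁ H₂) = k ^ 2 ∧
      cutNum (joinGraph H₁ H₂) (Finset.univ.image Sum.inl) = mcut (joinGraph H₁ H₂) ∧
      (⨆ i, (isHermitian_lap (joinGraph H₁ H₂)).eigenvalues i) =
        4 / (2 * (k : ℝ)) * mcut (joinGraph H₁ H₂) := by
  have hmcut : mcut (joinGraph H₁ H₂) = k ^ 2 := aux_mcut H₁ H₂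
  have hcn : cutNum (joinGraph H₁ H₂) (Finset.univ.image Sum.inl)
      = mcut (joinGraph H₁ H₂) := by
    rw [hmcut]; exact aux_cutNum_eq H₁ H₂
  have hsup : (⨆ i, (isHermitian_lap (joinGraph H₁ H₂)).eigenvalues i) = 2 * (k : ℝ) := by
    rcases Nat.eq_zero_or_pos k with hk | hk
    · subst hk
      rw [Real.iSup_of_isEmpty]
      simp
    · have hcard : ((Fintype.card (Fin k ⊕ Fin k) : ℝ)) = 2 * (k : ℝ) := by
        simp [Fintype.card_sum]
        ring
      have hpsd : ((2 * (k : ℝ)) • (1 : Matrix (Fin k ⊕ Fin k) (Fin k ⊕ Fin k) ℝ)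
          - (joinGraph H₁ H₂).lapMatrix ℝ).PosSemidef := by
        rw [← hcard]
        exact aux_card_smul_sub_lap (joinGraph H₁ H₂)
      haveI : Nonempty (Fin k ⊕ Fin k) := ⟨Sum.inl ⟨0, hk⟩⟩
      have hub : ∀ i, (isHermitian_lap (joinGraph H₁ H₂)).eigenvalues i ≤ 2 * (k : ℝ) :=
        fun i => aux_eig_le _ hpsd i
      have hx0 : pvec ((Finset.univ.image Sum.inl : Finset (Fin k ⊕ Fin k))) ≠ 0 := by
        intro h0
        have := congrFun h0 (Sum.inl ⟨0, hk⟩)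
        rw [aux_pvec_inl] at this
        norm_num at this
      obtain ⟨i0, hi0⟩ := aux_exists_eig (isHermitian_lap (joinGraph H₁ H₂)) hx0
        (aux_eigvec H₁ H₂)
      apply le_antisymm
      · exact ciSup_le hub
      · rw [← hi0]
        exact le_ciSup ⟨2 * (k : ℝ), by rintro y ⟨i, rfl⟩; exact hub i⟩ i0
  refine ⟨hsup, hmcut, hcn, ?_⟩
  rw [hsup, hmcut]
  rcases Nat.eq_zero_or_pos k with hk | hk
  · subst hk; simp
  · have hk0 : (k : ℝ) ≠ 0 := Nat.cast_ne_zero.mpr hk.ne'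
    push_cast
    field_simp
    ring
end
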